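/- arXiv:2003.06981 — 4 statements merged into one kernel-verified Lean document; each statement's English description precedes it below -/
import Mathlib

section
/- Let (Ω, 𝓕, P) be a probability space, let m be a sub-σ-algebra of 𝓕, and let X, Y : Ω → ℝ be integrable random variables. Define G := {ω : E[X | m](ω) > E[Y | m](ω)}, which is m-measurable. Then the random variable Z := X·1_G + Y·1_{G^c} is integrable and satisfies E[Z | m] = max(E[X | m], E[Y | m]) P-almost everywhere. (This is the core of the paper's Lemma on the lattice property obtained by finite mixing of two controls.) -/
open MeasureTheory

/-- Lattice property by finite mixing of two controls: if `G = {E[X|m] > E[Y|m]}`,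
then `G` is `m`-measurable, `Z = X·1_G + Y·1_{Gᶜ}` is integrable and
`E[Z|m] = max(E[X|m], E[Y|m])` a.e. -/
theorem stmt0 {Ω : Type*} [𝓕 : MeasurableSpace Ω] {P : Measure Ω} [IsProbabilityMeasure P]
    (m : MeasurableSpace Ω) (hm : m ≤ 𝓕) {X Y : Ω → ℝ}
    (hX : Integrable X P) (hY : Integrable Y P) :
    MeasurableSet[m] {ω | (P[X|m]) ω > (P[Y|m]) ω} ∧
    Integrable (fun ω => ({ω | (P[X|m]) ω > (P[Y|m]) ω}).indicator X ω
      + ({ω | (P[X|m]) ω > (P[Y|m]) ω})ᶜ.indicator Y ω) P ∧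
    P[(fun ω => ({ω | (P[X|m]) ω > (P[Y|m]) ω}).indicator X ω
      + ({ω | (P[X|m]) ω > (P[Y|m]) ω})ᶜ.indicator Y ω)|m]
      =ᵐ[P] fun ω => max ((P[X|m]) ω) ((P[Y|m]) ω) := by
  set G : Set Ω := {ω | (P[X|m]) ω > (P[Y|m]) ω} with hG
  have hGm : MeasurableSet[m] G := by
    have hXm := stronglyMeasurable_condExp (μ := P) (f := X) (m := m)
    have hYm := stronglyMeasurable_condExp (μ := P) (f := Y) (m := m)
    exact measurableSet_lt hYm.measurable hXm.measurable
  have hGF : MeasurableSet[𝓕] G := hm G hGm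
  have hIX : Integrable (G.indicator X) P := Integrable.indicator hX hGF
  have hIY : Integrable (Gᶜ.indicator Y) P := Integrable.indicator hY hGF.compl
  have hZ : Integrable (fun ω => G.indicator X ω + Gᶜ.indicator Y ω) P := hIX.add hIY
  refine ⟨hGm, hZ, ?_⟩
  have h1 := condExp_indicator hX hGm
  have h2 := condExp_indicator hY hGm.compl
  have hadd := condExp_add hIX hIY (m := m)
  refine (hadd.trans (h1.add h2)).trans ?_
  filter_upwards with ω
  by_cases hω : ω ∈ G
  · simp only [Pi.add_apply, Set.indicator_of_mem hω, Set.indicator_of_notMem (by simp [hω] : ω ∉ Gᶜ)]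
    have : (P[Y|m]) ω < (P[X|m]) ω := hω
    simp [max_eq_left this.le]
  · simp only [Pi.add_apply, Set.indicator_of_notMem hω, Set.indicator_of_mem (Set.mem_compl hω)]
    have : ¬ (P[Y|m]) ω < (P[X|m]) ω := hω
    simp [max_eq_right (not_lt.mp this)]
end

section
/- Let T > 0, let μ be a finite signed measure on ℝ with total variation norm ‖μ‖, and define g : [0,T] → ℝ by g(t) := μ([0,t]). Let f : [0,T] → ℝ be a bounded measurable function and ε > 0. Suppose there exists a continuous, strictly increasing bijection λ : [0,T] → [0,T] with λ(0)=0, λ(T)=T, such that sup_{t∈[0,T]} |λ(t) − t| ≤ ε and sup_{t∈[0,T]} |f(t) − g(λ(t))| ≤ ε. Then ( ∫_0^T |f(t) − g(t)|² dt )^{1/2} ≤ √T · ε + √ε · ‖μ‖. (This is the paper's lemma comparing the L²([0,T]) distance of two paths with their Skorokhod-type distance, made precise with the total variation of g in place of the constant 5‖f‖_∞ ∨ 5.) -/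
open MeasureTheory
open scoped ENNReal NNReal

lemma aux_abs_apply_le (μ : SignedMeasure ℝ) {i : Set ℝ} (hi : MeasurableSet i) :
    |μ i| ≤ (μ.totalVariation i).toReal := by
  have hrw : μ i = (μ.toJordanDecomposition.posPart i).toReal
      - (μ.toJordanDecomposition.negPart i).toReal := by
    conv_lhs => rw [← μ.toSignedMeasure_toJordanDecomposition]
    rw [JordanDecomposition.toSignedMeasure, VectorMeasure.sub_apply,
      Measure.toSignedMeasure_apply_measurable hi, Measure.toSignedMeasure_apply_measurable hi,
      measureReal_def, measureReal_def]
  rw [hrw, SignedMeasure.totalVariation, Measure.add_apply,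
    ENNReal.toReal_add (measure_ne_top _ _) (measure_ne_top _ _)]
  exact (abs_sub _ _).trans (by
    rw [abs_of_nonneg ENNReal.toReal_nonneg, abs_of_nonneg ENNReal.toReal_nonneg])

/-- Comparison of the `L²([0,T])` distance with the Skorokhod-type distance: if
`g(t) = μ([0,t])` for a finite signed measure `μ` and `λ` is a time change with
`sup|λ − id| ≤ ε` and `sup|f − g∘λ| ≤ ε`, then
`(∫₀ᵀ |f−g|²)^{1/2} ≤ √T·ε + √ε·‖μ‖`. -/
theorem stmt8 (T : ℝ) (hT : 0 < T) (μ : SignedMeasure ℝ)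
    (g : ℝ → ℝ) (hg : ∀ t, g t = μ (Set.Icc 0 t))
    (f : ℝ → ℝ) (hfm : Measurable f) (hfb : ∃ C, ∀ t ∈ Set.Icc (0 : ℝ) T, |f t| ≤ C)
    (ε : ℝ) (hε : 0 < ε)
    (lam : ℝ → ℝ) (hcont : ContinuousOn lam (Set.Icc 0 T))
    (hmono : StrictMonoOn lam (Set.Icc 0 T))
    (hbij : Set.BijOn lam (Set.Icc 0 T) (Set.Icc 0 T))
    (h0 : lam 0 = 0) (hlamT : lam T = T)
    (h1 : ∀ t ∈ Set.Icc (0 : ℝ) T, |lam t - t| ≤ ε)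
    (h2 : ∀ t ∈ Set.Icc (0 : ℝ) T, |f t - g (lam t)| ≤ ε) :
    Real.sqrt (∫ t in (0 : ℝ)..T, |f t - g t| ^ 2) ≤
      Real.sqrt T * ε + Real.sqrt ε * (μ.totalVariation Set.univ).toReal := by
  set ν : Measure ℝ := μ.totalVariation with hν
  haveI : IsFiniteMeasure ν := by rw [hν, SignedMeasure.totalVariation]; infer_instance
  set V : ℝ := (ν Set.univ).toReal with hV
  have hV0 : 0 ≤ V := ENNReal.toReal_nonneg
  -- measurability of g
  have hgm : Measurable g := by
    have hge : g = fun t => (μ.toJordanDecomposition.posPart (Set.Icc 0 t)).toReal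
        - (μ.toJordanDecomposition.negPart (Set.Icc 0 t)).toReal := by
      funext t
      rw [hg t]
      conv_lhs => rw [← μ.toSignedMeasure_toJordanDecomposition]
      rw [JordanDecomposition.toSignedMeasure, VectorMeasure.sub_apply,
        Measure.toSignedMeasure_apply_measurable measurableSet_Icc,
        Measure.toSignedMeasure_apply_measurable measurableSet_Icc,
        measureReal_def, measureReal_def]
    rw [hge]
    have hmsr : ∀ m : Measure ℝ, IsFiniteMeasure m →
        Measurable (fun t => (m (Set.Icc 0 t)).toReal) := by
      intro m hm
      refine Monotone.measurable (fun a b hab => ?_)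
      exact ENNReal.toReal_mono (measure_ne_top _ _)
        (measure_mono (Set.Icc_subset_Icc_right hab))
    exact ((hmsr _ inferInstance).sub (hmsr _ inferInstance))
  -- bound on g
  have hgb : ∀ t, |g t| ≤ V := by
    intro t
    rw [hg t]
    exact (aux_abs_apply_le μ measurableSet_Icc).trans
      (ENNReal.toReal_mono (measure_ne_top _ _) (measure_mono (Set.subset_univ _)))
  -- monotone extension of lam
  have hmapsTo := hbij.mapsTo
  set L : ℝ → ℝ := fun t => if t ∈ Set.Icc (0:ℝ) T then lam t else t with hLdef
  have hLeq : ∀ t ∈ Set.Icc (0:ℝ) T, L t = lam t := fun t ht => if_pos ht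
  have hLmono : Monotone L := by
    intro a b hab
    by_cases ha : a ∈ Set.Icc (0:ℝ) T <;> by_cases hb : b ∈ Set.Icc (0:ℝ) T <;>
      simp only [hLdef, ha, hb, if_pos, if_neg, if_true, if_false]
    · exact hmono.monotoneOn ha hb hab
    · have hbT : T < b := by
        exact (by simpa [Set.mem_Icc] using hb : 0 ≤ b → T < b) (ha.1.trans hab)
      exact ((hmapsTo ha).2).trans hbT.le
    · have ha0 : a < 0 := by
        by_contra hc
        have := (by simpa [Set.mem_Icc] using ha : 0 ≤ a → T < a) (le_of_not_gt hc)
        linarith [hb.2]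
      exact ha0.le.trans (hmapsTo hb).1
    · exact hab
  have hLm : Measurable L := hLmono.measurable
  -- the product set
  set S : Set (ℝ × ℝ) := {p : ℝ × ℝ | (p.1 < p.2 ∧ p.2 ≤ L p.1) ∨ (L p.1 < p.2 ∧ p.2 ≤ p.1)}
    with hSdef
  have hS : MeasurableSet S := by
    apply MeasurableSet.union
    · exact (measurableSet_lt measurable_fst measurable_snd).inter
        (measurableSet_le measurable_snd (hLm.comp measurable_fst))
    · exact (measurableSet_lt (hLm.comp measurable_fst) measurable_snd).inter
        (measurableSet_le measurable_snd measurable_fst)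
  set I : ℝ → Set ℝ := fun t => Set.Ioc (min t (L t)) (max t (L t)) with hIdef
  have hIt : ∀ t, Prod.mk t ⁻¹' S = I t := by
    intro t
    ext s
    simp only [hIdef, hSdef, Set.mem_preimage, Set.mem_setOf_eq, Set.mem_Ioc]
    constructor
    · rintro (⟨h, h'⟩ | ⟨h, h'⟩)
      · exact ⟨lt_of_le_of_lt (min_le_left _ _) h, h'.trans (le_max_right _ _)⟩
      · exact ⟨lt_of_le_of_lt (min_le_right _ _) h, h'.trans (le_max_left _ _)⟩
    · rintro ⟨h, h'⟩
      rcases le_total t (L t) with hc | hc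
      · rw [min_eq_left hc, max_eq_right hc] at *
        exact Or.inl ⟨h, h'⟩
      · rw [min_eq_right hc, max_eq_left hc] at *
        exact Or.inr ⟨h, h'⟩
  set ρ : Measure ℝ := volume.restrict (Set.Ioc 0 T) with hρdef
  haveI : IsFiniteMeasure ρ := by
    constructor
    rw [hρdef, Measure.restrict_apply_univ, Real.volume_Ioc]
    exact ENNReal.ofReal_lt_top
  -- slice bound
  have hslice : ∀ s : ℝ, ρ ((fun t => (t, s)) ⁻¹' S) ≤ ENNReal.ofReal ε := by
    intro s
    have hpm : MeasurableSet ((fun t => (t, s)) ⁻¹' S) :=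
      hS.preimage (measurable_id.prodMk measurable_const)
    rw [hρdef, Measure.restrict_apply hpm]
    by_cases hs : s ∈ Set.Ioc (0:ℝ) T
    · obtain ⟨u, hu, hus⟩ := hbij.surjOn (Set.Ioc_subset_Icc_self hs)
      have hsub : (fun t => (t, s)) ⁻¹' S ∩ Set.Ioc 0 T ⊆
          Set.Ico (min u s) (max u s) := by
        rintro t ⟨htS, htI⟩
        have htIcc : t ∈ Set.Icc (0:ℝ) T := Set.Ioc_subset_Icc_self htI
        have hLt : L t = lam t := hLeq t htIcc
        simp only [hSdef, Set.mem_preimage, Set.mem_setOf_eq, hLt] at htS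
        rcases htS with ⟨h, h'⟩ | ⟨h, h'⟩
        · have hut : u ≤ t := by
            rw [← hmono.le_iff_le hu htIcc]
            rw [hus]; exact h'
          exact ⟨(min_le_left _ _).trans hut, h.trans_le (le_max_right _ _)⟩
        · have htu : t < u := by
            rw [← hmono.lt_iff_lt htIcc hu]
            rw [hus]; exact h
          exact ⟨(min_le_right _ _).trans h', htu.trans_le (le_max_left _ _)⟩
      calc volume ((fun t => (t, s)) ⁻¹' S ∩ Set.Ioc 0 T)
          ≤ volume (Set.Ico (min u s) (max u s)) := measure_mono hsub
        _ = ENNReal.ofReal (max u s - min u s) := Real.volume_Ico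
        _ ≤ ENNReal.ofReal ε := by
            apply ENNReal.ofReal_le_ofReal
            rw [max_sub_min_eq_abs, ← hus]
            exact h1 u hu
    · have hempty : (fun t => (t, s)) ⁻¹' S ∩ Set.Ioc 0 T = ∅ := by
        ext t
        simp only [Set.mem_inter_iff, Set.mem_preimage, hSdef, Set.mem_setOf_eq,
          Set.mem_empty_iff_false, iff_false, Set.mem_Ioc]
        rintro ⟨(⟨h, h'⟩ | ⟨h, h'⟩), ht0, htT⟩
        · have htIcc : t ∈ Set.Icc (0:ℝ) T := ⟨ht0.le, htT⟩
          rw [hLeq t htIcc] at h'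
          exact hs ⟨ht0.trans h, h'.trans (hmapsTo htIcc).2⟩
        · have htIcc : t ∈ Set.Icc (0:ℝ) T := ⟨ht0.le, htT⟩
          rw [hLeq t htIcc] at h
          exact hs ⟨lt_of_le_of_lt (hmapsTo htIcc).1 h, h'.trans htT⟩
      rw [hempty]
      simp
  -- Fubini
  have key1 : ∫⁻ t, ν (I t) ∂ρ ≤ ENNReal.ofReal ε * ν Set.univ := by
    have hprod : ∫⁻ t, ν (I t) ∂ρ = (ρ.prod ν) S := by
      rw [Measure.prod_apply hS]
      exact lintegral_congr fun t => by rw [hIt t]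
    rw [hprod, Measure.prod_apply_symm hS]
    calc ∫⁻ s, ρ ((fun t => (t, s)) ⁻¹' S) ∂ν
        ≤ ∫⁻ _, ENNReal.ofReal ε ∂ν := lintegral_mono hslice
      _ = ENNReal.ofReal ε * ν Set.univ := by rw [lintegral_const]
  -- pointwise bound via total variation
  have hpt : ∀ t ∈ Set.Icc (0:ℝ) T, (‖g (lam t) - g t‖₊ : ℝ≥0∞) ≤ ν (I t) := by
    intro t ht
    have hLt : L t = lam t := hLeq t ht
    set a := min t (lam t) with hadef
    set b := max t (lam t) with hbdef
    have ha0 : 0 ≤ a := le_min ht.1 (hmapsTo ht).1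
    have hab : a ≤ b := min_le_max
    have hsplit : μ (Set.Icc 0 b) = μ (Set.Icc 0 a) + μ (Set.Ioc a b) := by
      rw [← Set.Icc_union_Ioc_eq_Icc ha0 hab]
      exact VectorMeasure.of_union ((Set.Iic_disjoint_Ioc le_rfl).mono Set.Icc_subset_Iic_self le_rfl)
        measurableSet_Icc measurableSet_Ioc
    have habs : |g (lam t) - g t| = |μ (Set.Ioc a b)| := by
      have hgb' : g b - g a = μ (Set.Ioc a b) := by
        rw [hg a, hg b, hsplit]; ring
      rcases le_total t (lam t) with hc | hc
      · rw [hadef, hbdef, min_eq_left hc, max_eq_right hc] at hgb' ⊢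
        rw [← hgb']
      · rw [hadef, hbdef, min_eq_right hc, max_eq_left hc] at hgb' ⊢
        rw [← hgb', abs_sub_comm]
    rw [← enorm_eq_nnnorm, Real.enorm_eq_ofReal_abs, habs]
    have hle : |μ (Set.Ioc a b)| ≤ (ν (Set.Ioc a b)).toReal :=
      aux_abs_apply_le μ measurableSet_Ioc
    have : I t = Set.Ioc a b := by rw [hIdef]; simp only [hLt]; rfl
    rw [this]
    exact ENNReal.ofReal_le_of_le_toReal hle
  -- set up functions
  set F : ℝ → ℝ := fun t => f t - g t with hFdef
  set F1 : ℝ → ℝ := fun t => f t - g (lam t) with hF1def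
  set F2 : ℝ → ℝ := fun t => g (lam t) - g t with hF2def
  have hFsum : F = F1 + F2 := by
    funext t; simp only [hFdef, hF1def, hF2def, Pi.add_apply]; ring
  have haeL : (fun t => g (lam t)) =ᵐ[ρ] (fun t => g (L t)) := by
    rw [hρdef]
    filter_upwards [ae_restrict_mem measurableSet_Ioc] with t ht
    rw [hLeq t (Set.Ioc_subset_Icc_self ht)]
  have hGm : AEStronglyMeasurable (fun t => g (lam t)) ρ :=
    ((hgm.comp hLm).aestronglyMeasurable).congr haeL.symm
  have hF1m : AEStronglyMeasurable F1 ρ := (hfm.aestronglyMeasurable).sub hGm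
  have hF2m : AEStronglyMeasurable F2 ρ := hGm.sub hgm.aestronglyMeasurable
  have hFm : AEStronglyMeasurable F ρ := (hfm.sub hgm).aestronglyMeasurable
  -- Minkowski
  have hmink : eLpNorm F 2 ρ ≤ eLpNorm F1 2 ρ + eLpNorm F2 2 ρ := by
    rw [hFsum]; exact eLpNorm_add_le hF1m hF2m one_le_two
  -- first bound
  have hb1 : eLpNorm F1 2 ρ ≤ ENNReal.ofReal (Real.sqrt T * ε) := by
    have hbd : ∀ᵐ t ∂ρ, ‖F1 t‖ ≤ ε := by
      rw [hρdef]
      filter_upwards [ae_restrict_mem measurableSet_Ioc] with t ht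
      simpa [hF1def, Real.norm_eq_abs] using h2 t (Set.Ioc_subset_Icc_self ht)
    calc eLpNorm F1 2 ρ ≤ ρ Set.univ ^ (2 : ℝ≥0∞).toReal⁻¹ * ENNReal.ofReal ε :=
        eLpNorm_le_of_ae_bound hbd
      _ = ENNReal.ofReal (Real.sqrt T * ε) := by
        rw [hρdef, Measure.restrict_apply_univ, Real.volume_Ioc, sub_zero,
          ENNReal.toReal_ofNat, ENNReal.ofReal_rpow_of_nonneg hT.le (by norm_num),
          ← ENNReal.ofReal_mul (by positivity)]
        congr 1
        rw [Real.sqrt_eq_rpow, one_div]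
  -- second bound
  have hb2 : eLpNorm F2 2 ρ ≤ ENNReal.ofReal (Real.sqrt ε * V) := by
    rw [eLpNorm_eq_lintegral_rpow_enorm_toReal (two_ne_zero) (ENNReal.ofNat_ne_top),
      ENNReal.toReal_ofNat]
    have hint : ∫⁻ t, (‖F2 t‖₊ : ℝ≥0∞) ^ (2 : ℝ) ∂ρ
        ≤ ν Set.univ * (ENNReal.ofReal ε * ν Set.univ) := by
      have hmono' : ∫⁻ t, (‖F2 t‖₊ : ℝ≥0∞) ^ (2 : ℝ) ∂ρ
          ≤ ∫⁻ t, ν Set.univ * ν (I t) ∂ρ := by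
        apply lintegral_mono_ae
        rw [hρdef]
        filter_upwards [ae_restrict_mem measurableSet_Ioc] with t ht
        have h' := hpt t (Set.Ioc_subset_Icc_self ht)
        calc (‖F2 t‖₊ : ℝ≥0∞) ^ (2 : ℝ) ≤ ν (I t) ^ (2 : ℝ) :=
            ENNReal.rpow_le_rpow h' (by norm_num)
          _ = ν (I t) * ν (I t) := by
            rw [show (2 : ℝ) = ((2 : ℕ) : ℝ) by norm_num, ENNReal.rpow_natCast, sq]
          _ ≤ ν Set.univ * ν (I t) :=
            mul_le_mul_left (measure_mono (Set.subset_univ _)) _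
      refine hmono'.trans ?_
      rw [lintegral_const_mul' _ _ (measure_ne_top _ _)]
      exact mul_le_mul_right key1 _
    calc (∫⁻ t, (‖F2 t‖₊ : ℝ≥0∞) ^ (2 : ℝ) ∂ρ) ^ (1 / (2 : ℝ))
        ≤ (ν Set.univ * (ENNReal.ofReal ε * ν Set.univ)) ^ (1 / (2 : ℝ)) :=
          ENNReal.rpow_le_rpow hint (by norm_num)
      _ = ENNReal.ofReal (Real.sqrt ε * V) := by
          rw [show ν Set.univ = ENNReal.ofReal V by
            rw [hV, ENNReal.ofReal_toReal (measure_ne_top _ _)],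
            ← ENNReal.ofReal_mul hε.le, ← ENNReal.ofReal_mul hV0,
            ENNReal.ofReal_rpow_of_nonneg (by positivity) (by norm_num)]
          congr 1
          rw [← Real.sqrt_eq_rpow, show V * (ε * V) = ε * (V * V) by ring,
            Real.sqrt_mul hε.le, Real.sqrt_mul_self hV0]
  -- Memℒp
  obtain ⟨C, hC⟩ := hfb
  have hFb : ∀ᵐ t ∂ρ, ‖F t‖ ≤ C + V := by
    rw [hρdef]
    filter_upwards [ae_restrict_mem measurableSet_Ioc] with t ht
    rw [Real.norm_eq_abs]
    exact (abs_sub _ _).trans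
      (add_le_add (hC t (Set.Ioc_subset_Icc_self ht)) (hgb t))
  have hmem : MemLp F 2 ρ := MemLp.of_bound hFm (C + V) hFb
  have heq := hmem.eLpNorm_eq_integral_rpow_norm two_ne_zero ENNReal.ofNat_ne_top
  have hInt : ∫ t in (0 : ℝ)..T, |F t| ^ 2 = ∫ t, ‖F t‖ ^ (2 : ℝ≥0∞).toReal ∂ρ := by
    have hx : ∀ x : ℝ, ‖x‖ ^ (2 : ℝ≥0∞).toReal = |x| ^ 2 := fun x => by
      rw [Real.norm_eq_abs, ENNReal.toReal_ofNat,
        show (2 : ℝ) = ((2 : ℕ) : ℝ) by norm_num, Real.rpow_natCast]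
    rw [intervalIntegral.integral_of_le hT.le]
    simp only [hx]; rfl
  have hfin : Real.sqrt (∫ t, ‖F t‖ ^ (2 : ℝ≥0∞).toReal ∂ρ) = (eLpNorm F 2 ρ).toReal := by
    have hnn : (0:ℝ) ≤ (∫ t, ‖F t‖ ^ (2 : ℝ≥0∞).toReal ∂ρ) ^ (2 : ℝ≥0∞).toReal⁻¹ :=
      Real.rpow_nonneg (integral_nonneg fun t => Real.rpow_nonneg (norm_nonneg _) _) _
    rw [heq, ENNReal.toReal_ofReal hnn, Real.sqrt_eq_rpow, ENNReal.toReal_ofNat, one_div]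
  calc Real.sqrt (∫ t in (0 : ℝ)..T, |F t| ^ 2)
      = (eLpNorm F 2 ρ).toReal := by rw [hInt]; exact hfin
    _ ≤ (ENNReal.ofReal (Real.sqrt T * ε) + ENNReal.ofReal (Real.sqrt ε * V)).toReal := by
        apply ENNReal.toReal_mono
        · exact ENNReal.add_ne_top.2 ⟨ENNReal.ofReal_ne_top, ENNReal.ofReal_ne_top⟩
        · exact hmink.trans (add_le_add hb1 hb2)
    _ = Real.sqrt T * ε + Real.sqrt ε * V := by
        rw [← ENNReal.ofReal_add (by positivity) (by positivity),
          ENNReal.toReal_ofReal (by positivity)]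
end

section
/- Let T > 0, let μ be a finite signed measure on ℝ with total variation norm ‖μ‖, define g : [0,T] → ℝ by g(t) := μ([0,t]), and let ε > 0. Let λ : [0,T] → [0,T] be a continuous, strictly increasing bijection with λ(0)=0, λ(T)=T and sup_{t∈[0,T]} |λ(t) − t| ≤ ε. Then ∫_0^T | g(λ(t)) − g(t) |² dt ≤ ε · ‖μ‖². (This is the key intermediate estimate in the paper's proof of the comparison between the L² distance and the Skorokhod distance, obtained by writing the squared integrand as a double integral against μ⊗μ via Fubini's theorem.) -/
open MeasureTheory

/-- Key intermediate estimate: for `g(t) = μ([0,t])` with `μ` a finite signed measure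
and a time change `λ` with `sup|λ − id| ≤ ε`, one has
`∫₀ᵀ |g(λ(t)) − g(t)|² dt ≤ ε·‖μ‖²`. -/
theorem stmt9 (T : ℝ) (hT : 0 < T) (μ : SignedMeasure ℝ)
    (g : ℝ → ℝ) (hg : ∀ t, g t = μ (Set.Icc 0 t))
    (ε : ℝ) (hε : 0 < ε)
    (lam : ℝ → ℝ) (hcont : ContinuousOn lam (Set.Icc 0 T))
    (hmono : StrictMonoOn lam (Set.Icc 0 T))
    (hbij : Set.BijOn lam (Set.Icc 0 T) (Set.Icc 0 T))
    (h0 : lam 0 = 0) (hlamT : lam T = T)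
    (h1 : ∀ t ∈ Set.Icc (0 : ℝ) T, |lam t - t| ≤ ε) :
    ∫ t in (0 : ℝ)..T, |g (lam t) - g t| ^ 2 ≤
      ε * (μ.totalVariation Set.univ).toReal ^ 2 := by
  classical
  set ν := μ.totalVariation with hν
  haveI : IsFiniteMeasure ν := by
    rw [hν, MeasureTheory.SignedMeasure.totalVariation]; infer_instance
  -- |μ s| ≤ (ν s).toReal for measurable s
  have habs : ∀ s : Set ℝ, MeasurableSet s → |μ s| ≤ (ν s).toReal := by
    intro s hs
    have h1' : μ s = (μ.toJordanDecomposition.posPart s).toReal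
        - (μ.toJordanDecomposition.negPart s).toReal := by
      conv_lhs => rw [← μ.toSignedMeasure_toJordanDecomposition]
      rw [MeasureTheory.JordanDecomposition.toSignedMeasure]
      exact MeasureTheory.Measure.toSignedMeasure_sub_apply hs
    have h2' : (ν s).toReal = (μ.toJordanDecomposition.posPart s).toReal
        + (μ.toJordanDecomposition.negPart s).toReal := by
      rw [hν, MeasureTheory.SignedMeasure.totalVariation, Measure.add_apply,
        ENNReal.toReal_add (measure_ne_top _ _) (measure_ne_top _ _)]
    have p1 := ENNReal.toReal_nonneg (a := μ.toJordanDecomposition.posPart s)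
    have p2 := ENNReal.toReal_nonneg (a := μ.toJordanDecomposition.negPart s)
    rw [h1', h2']
    rw [abs_le]
    constructor <;> linarith
  -- monotone extension of lam
  set L : ℝ → ℝ := fun t => if t ∈ Set.Icc 0 T then lam t else t with hLdef
  have hLeq : ∀ t ∈ Set.Icc (0:ℝ) T, L t = lam t := fun t ht => if_pos ht
  have hLmem : ∀ t ∈ Set.Icc (0:ℝ) T, L t ∈ Set.Icc (0:ℝ) T := fun t ht => by
    rw [hLeq t ht]; exact hbij.mapsTo ht
  have hLmono : Monotone L := by
    intro a b hab
    by_cases ha : a ∈ Set.Icc (0:ℝ) T <;> by_cases hb : b ∈ Set.Icc (0:ℝ) T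
    · rw [hLeq a ha, hLeq b hb]; exact hmono.monotoneOn ha hb hab
    · have hbT : T < b := by
        have hb' := hb
        simp only [Set.mem_Icc, not_and, not_le] at hb'
        exact hb' (le_trans ha.1 hab)
      rw [hLeq a ha]; simp only [hLdef]; rw [if_neg hb]
      exact le_trans ((hbij.mapsTo ha).2) hbT.le
    · have ha0 : a < 0 := by
        have ha' := ha
        simp only [Set.mem_Icc, not_and, not_le] at ha'
        by_contra hc
        push_neg at hc
        exact absurd (le_trans hab hb.2) (not_le.mpr (ha' hc))
      rw [hLeq b hb]; simp only [hLdef]; rw [if_neg ha]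
      exact le_trans ha0.le (hbij.mapsTo hb).1
    · simp only [hLdef]; rw [if_neg ha, if_neg hb]; exact hab
  have hLmeas : Measurable L := hLmono.measurable
  -- measurability of g
  have hgmeas : Measurable g := by
    have : g = fun t => (μ.toJordanDecomposition.posPart (Set.Icc 0 t)).toReal
        - (μ.toJordanDecomposition.negPart (Set.Icc 0 t)).toReal := by
      funext t
      rw [hg t]
      conv_lhs => rw [← μ.toSignedMeasure_toJordanDecomposition]
      rw [MeasureTheory.JordanDecomposition.toSignedMeasure]
      exact MeasureTheory.Measure.toSignedMeasure_sub_apply measurableSet_Icc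
    rw [this]
    have hm1 : Monotone fun t => (μ.toJordanDecomposition.posPart (Set.Icc 0 t)).toReal :=
      fun a b hab => ENNReal.toReal_mono (measure_ne_top _ _)
        (measure_mono (Set.Icc_subset_Icc_right hab))
    have hm2 : Monotone fun t => (μ.toJordanDecomposition.negPart (Set.Icc 0 t)).toReal :=
      fun a b hab => ENNReal.toReal_mono (measure_ne_top _ _)
        (measure_mono (Set.Icc_subset_Icc_right hab))
    exact hm1.measurable.sub hm2.measurable
  -- the key interval
  set I : ℝ → Set ℝ := fun t => Set.Ioc (min t (L t)) (max t (L t)) with hI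
  -- pointwise bound
  have hpt : ∀ t ∈ Set.Icc (0:ℝ) T, |g (L t) - g t| ≤ (ν (I t)).toReal := by
    intro t ht
    have ht0 : (0:ℝ) ≤ t := ht.1
    have hd : ∀ a b : ℝ, 0 ≤ a → a ≤ b →
        |g b - g a| ≤ (ν (Set.Ioc a b)).toReal := by
      intro a b ha hab
      have hunion : Set.Icc 0 b = Set.Icc 0 a ∪ Set.Ioc a b :=
        (Set.Icc_union_Ioc_eq_Icc ha hab).symm
      have hdisj : Disjoint (Set.Icc (0:ℝ) a) (Set.Ioc a b) :=
        Set.disjoint_left.mpr fun x hx hx2 => absurd hx.2 (not_le.mpr hx2.1)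
      have hμ : μ (Set.Icc 0 b) = μ (Set.Icc 0 a) + μ (Set.Ioc a b) := by
        rw [hunion]
        exact MeasureTheory.VectorMeasure.of_union hdisj measurableSet_Icc measurableSet_Ioc
      have : g b - g a = μ (Set.Ioc a b) := by rw [hg, hg, hμ]; ring
      rw [this]
      exact habs _ measurableSet_Ioc
    rcases le_total t (L t) with h | h
    · rw [hI]; simp only [min_eq_left h, max_eq_right h]
      exact hd t (L t) ht0 h
    · rw [hI]; simp only [min_eq_right h, max_eq_left h]
      rw [abs_sub_comm]
      exact hd (L t) t (hLmem t ht).1 h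
  set M := (ν Set.univ).toReal with hM
  -- product set
  set S : Set (ℝ × ℝ) := {q | min q.1 (L q.1) < q.2 ∧ q.2 ≤ max q.1 (L q.1)} with hS
  have hSmeas : MeasurableSet S := by
    have m1 : Measurable fun q : ℝ × ℝ => min q.1 (L q.1) :=
      measurable_fst.min (hLmeas.comp measurable_fst)
    have m2 : Measurable fun q : ℝ × ℝ => max q.1 (L q.1) :=
      measurable_fst.max (hLmeas.comp measurable_fst)
    exact (measurableSet_lt m1 measurable_snd).inter (measurableSet_le measurable_snd m2)
  have hslice : ∀ t : ℝ, Prod.mk t ⁻¹' S = I t := by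
    intro t; ext x
    simp [hS, hI, Set.mem_Ioc]
  have hνI : Measurable fun t => ν (I t) := by
    have := measurable_measure_prodMk_left (ν := ν) hSmeas
    simpa only [hslice] using this
  -- Fubini bound
  have hkey : ∫⁻ t in Set.Ioc (0:ℝ) T, ν (I t) ≤ ENNReal.ofReal ε * ν Set.univ := by
    have hrw : ∀ t : ℝ, ν (I t) = ∫⁻ x, S.indicator (1 : ℝ × ℝ → ENNReal) (t, x) ∂ν := by
      intro t
      have heq : ∀ x, S.indicator (1 : ℝ × ℝ → ENNReal) (t, x)
          = (I t).indicator (1 : ℝ → ENNReal) x := by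
        intro x
        simp only [Set.indicator_apply, ← hslice t, Set.mem_preimage, Pi.one_apply]
      simp_rw [heq]
      exact (lintegral_indicator_one (μ := ν) (measurableSet_Ioc)).symm
    have hu : Measurable (Function.uncurry fun t x =>
        S.indicator (1 : ℝ × ℝ → ENNReal) (t, x)) := by
      have huu : (Function.uncurry fun t x => S.indicator (1 : ℝ × ℝ → ENNReal) (t, x))
          = S.indicator 1 := rfl
      rw [huu]
      exact measurable_one.indicator hSmeas
    have hswap : ∫⁻ t in Set.Ioc (0:ℝ) T, ∫⁻ x, S.indicator (1 : ℝ × ℝ → ENNReal) (t, x) ∂ν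
        = ∫⁻ x, ∫⁻ t, S.indicator (1 : ℝ × ℝ → ENNReal) (t, x)
            ∂(volume.restrict (Set.Ioc (0:ℝ) T)) ∂ν :=
      lintegral_lintegral_swap hu.aemeasurable
    have hinner : ∀ x : ℝ, ∫⁻ t, S.indicator (1 : ℝ × ℝ → ENNReal) (t, x)
          ∂(volume.restrict (Set.Ioc (0:ℝ) T)) ≤ ENNReal.ofReal ε := by
      intro x
      have hAx : MeasurableSet {t : ℝ | (t, x) ∈ S} :=
        hSmeas.preimage measurable_prodMk_right
      have heq : ∀ t : ℝ, S.indicator (1 : ℝ × ℝ → ENNReal) (t, x)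
          = Set.indicator {t : ℝ | (t, x) ∈ S} (1 : ℝ → ENNReal) t := by
        intro t; simp only [Set.indicator_apply, Set.mem_setOf_eq, Pi.one_apply]
      simp_rw [heq]
      rw [lintegral_indicator_one hAx, Measure.restrict_apply hAx]
      by_cases hx : x ∈ Set.Icc (0:ℝ) T
      · obtain ⟨s, hs, hsx⟩ := hbij.surjOn hx
        have hsub : {t : ℝ | (t, x) ∈ S} ∩ Set.Ioc 0 T ⊆ Set.Icc (min x s) (max x s) := by
          rintro t ⟨htS, htT⟩
          have htI : t ∈ Set.Icc (0:ℝ) T := ⟨htT.1.le, htT.2⟩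
          have htS' : min t (lam t) < x ∧ x ≤ max t (lam t) := by
            rw [← hLeq t htI]; exact htS
          rcases le_total t (lam t) with h | h
          · have h1' : t < x := by
              have := htS'.1; rwa [min_eq_left h] at this
            have h2' : x ≤ lam t := by
              have := htS'.2; rwa [max_eq_right h] at this
            have hst : s ≤ t := by
              by_contra hc; push_neg at hc
              exact absurd (hsx ▸ hmono htI hs hc) (not_lt.mpr h2')
            exact ⟨le_trans (min_le_right _ _) hst, le_trans h1'.le (le_max_left _ _)⟩
          · have h1' : lam t < x := by
              have := htS'.1; rwa [min_eq_right h] at this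
            have h2' : x ≤ t := by
              have := htS'.2; rwa [max_eq_left h] at this
            have hst : t ≤ s := by
              by_contra hc; push_neg at hc
              exact absurd (hsx ▸ hmono hs htI hc) (not_lt.mpr h1'.le)
            exact ⟨le_trans (min_le_left _ _) h2', le_trans hst (le_max_right _ _)⟩
        calc volume ({t : ℝ | (t, x) ∈ S} ∩ Set.Ioc 0 T)
            ≤ volume (Set.Icc (min x s) (max x s)) := measure_mono hsub
          _ = ENNReal.ofReal (max x s - min x s) := Real.volume_Icc
          _ ≤ ENNReal.ofReal ε := by
              apply ENNReal.ofReal_le_ofReal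
              rw [max_sub_min_eq_abs, ← hsx, abs_sub_comm]
              exact h1 s hs
      · have hempty : {t : ℝ | (t, x) ∈ S} ∩ Set.Ioc 0 T = ∅ := by
          ext t
          simp only [Set.mem_empty_iff_false, iff_false]
          rintro ⟨htS, h0t, hTt⟩
          have hlt' : min t (L t) < x ∧ x ≤ max t (L t) := htS
          obtain ⟨hlt, hle⟩ := hlt'
          have htI : t ∈ Set.Icc (0:ℝ) T := ⟨h0t.le, hTt⟩
          have hLt := hLmem t htI
          apply hx
          constructor
          · calc (0:ℝ) ≤ min t (L t) := le_min htI.1 hLt.1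
              _ ≤ x := hlt.le
          · calc x ≤ max t (L t) := hle
              _ ≤ T := max_le htI.2 hLt.2
        rw [hempty]
        simp
    calc ∫⁻ t in Set.Ioc (0:ℝ) T, ν (I t)
        = ∫⁻ t in Set.Ioc (0:ℝ) T, ∫⁻ x, S.indicator (1 : ℝ × ℝ → ENNReal) (t, x) ∂ν := by
          simp_rw [hrw]
      _ = ∫⁻ x, ∫⁻ t, S.indicator (1 : ℝ × ℝ → ENNReal) (t, x)
            ∂(volume.restrict (Set.Ioc (0:ℝ) T)) ∂ν := hswap
      _ ≤ ∫⁻ _x, ENNReal.ofReal ε ∂ν := lintegral_mono hinner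
      _ = ENNReal.ofReal ε * ν Set.univ := lintegral_const _
  -- main set-integral bound
  have hFmeas : Measurable fun t => |g (L t) - g t| ^ 2 :=
    ((hgmeas.comp hLmeas).sub hgmeas).abs.pow_const 2
  have hmain : ∫ t in Set.Ioc (0:ℝ) T, |g (L t) - g t| ^ 2 ≤ ε * M ^ 2 := by
    rw [MeasureTheory.integral_eq_lintegral_of_nonneg_ae
      (Filter.Eventually.of_forall fun t => by positivity) hFmeas.aestronglyMeasurable]
    have hle : ∫⁻ t in Set.Ioc (0:ℝ) T, ENNReal.ofReal (|g (L t) - g t| ^ 2)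
        ≤ ENNReal.ofReal ε * ν Set.univ * ν Set.univ := by
      calc ∫⁻ t in Set.Ioc (0:ℝ) T, ENNReal.ofReal (|g (L t) - g t| ^ 2)
          ≤ ∫⁻ t in Set.Ioc (0:ℝ) T, ν (I t) * ν Set.univ := by
            apply setLIntegral_mono (hνI.mul_const _)
            intro t ht
            have htI : t ∈ Set.Icc (0:ℝ) T := ⟨ht.1.le, ht.2⟩
            have ha := hpt t htI
            have haM : (ν (I t)).toReal ≤ M :=
              ENNReal.toReal_mono (measure_ne_top ν _) (measure_mono (Set.subset_univ _))
            have h2 : |g (L t) - g t| ^ 2 ≤ (ν (I t)).toReal * M := by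
              calc |g (L t) - g t| ^ 2 = |g (L t) - g t| * |g (L t) - g t| := sq _
                _ ≤ (ν (I t)).toReal * M :=
                  mul_le_mul ha (le_trans ha haM) (abs_nonneg _) ENNReal.toReal_nonneg
            calc ENNReal.ofReal (|g (L t) - g t| ^ 2)
                ≤ ENNReal.ofReal ((ν (I t)).toReal * M) := ENNReal.ofReal_le_ofReal h2
              _ = ν (I t) * ν Set.univ := by
                  rw [ENNReal.ofReal_mul ENNReal.toReal_nonneg, hM,
                    ENNReal.ofReal_toReal (measure_ne_top _ _),
                    ENNReal.ofReal_toReal (measure_ne_top _ _)]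
        _ = (∫⁻ t in Set.Ioc (0:ℝ) T, ν (I t)) * ν Set.univ := lintegral_mul_const _ hνI
        _ ≤ ENNReal.ofReal ε * ν Set.univ * ν Set.univ := mul_le_mul_left hkey _
    have hne : ENNReal.ofReal ε * ν Set.univ * ν Set.univ ≠ ⊤ :=
      ENNReal.mul_ne_top (ENNReal.mul_ne_top ENNReal.ofReal_ne_top (measure_ne_top _ _))
        (measure_ne_top _ _)
    calc (∫⁻ t in Set.Ioc (0:ℝ) T, ENNReal.ofReal (|g (L t) - g t| ^ 2)).toReal
        ≤ (ENNReal.ofReal ε * ν Set.univ * ν Set.univ).toReal := ENNReal.toReal_mono hne hle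
      _ = ε * M ^ 2 := by
          rw [ENNReal.toReal_mul, ENNReal.toReal_mul, ENNReal.toReal_ofReal hε.le, ← hM]
          ring
  rw [intervalIntegral.integral_of_le hT.le]
  calc ∫ t in Set.Ioc (0:ℝ) T, |g (lam t) - g t| ^ 2
      = ∫ t in Set.Ioc (0:ℝ) T, |g (L t) - g t| ^ 2 :=
        setIntegral_congr_fun measurableSet_Ioc fun t ht => by
          rw [hLeq t ⟨ht.1.le, ht.2⟩]
    _ ≤ ε * M ^ 2 := hmain
end

section
/- Let T > 0 and let λ : [0,T] → [0,T] be a continuous, strictly increasing bijection with λ(0)=0 and λ(T)=T. Then for every u ∈ [0,T], ∫_0^T | 1_{[0,λ(t)]}(u) − 1_{[0,t]}(u) | dt ≤ | u − λ^{-1}(u) | ≤ sup_{x ∈ [0,T]} | x − λ(x) |. (This indicator-function estimate, based on the equivalences t < u ≤ λ(t) ⟺ λ^{-1}(u) ≤ t < u and λ(t) < u ≤ t ⟺ u ≤ t < λ^{-1}(u), is the combinatorial heart of the paper's L²-versus-Skorokhod distance lemma.) -/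
open MeasureTheory


/-- Indicator-function estimate: for a continuous strictly increasing bijection
`λ : [0,T] → [0,T]` fixing the endpoints, with inverse `ν`, and `u ∈ [0,T]`,
`∫₀ᵀ |1_{[0,λ(t)]}(u) − 1_{[0,t]}(u)| dt ≤ |u − ν(u)| ≤ sup_{x∈[0,T]} |x − λ(x)|`. -/
theorem stmt10 (T : ℝ) (hT : 0 < T)
    (lam ν : ℝ → ℝ) (hcont : ContinuousOn lam (Set.Icc 0 T))
    (hmono : StrictMonoOn lam (Set.Icc 0 T))
    (hbij : Set.BijOn lam (Set.Icc 0 T) (Set.Icc 0 T))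
    (h0 : lam 0 = 0) (hlamT : lam T = T)
    (hinv1 : ∀ t ∈ Set.Icc (0 : ℝ) T, ν (lam t) = t)
    (hinv2 : ∀ u ∈ Set.Icc (0 : ℝ) T, lam (ν u) = u)
    (u : ℝ) (hu : u ∈ Set.Icc (0 : ℝ) T) :
    (∫ t in (0 : ℝ)..T,
        |(Set.Icc (0 : ℝ) (lam t)).indicator (fun _ => (1 : ℝ)) u
          - (Set.Icc (0 : ℝ) t).indicator (fun _ => (1 : ℝ)) u|) ≤ |u - ν u| ∧
      |u - ν u| ≤ ⨆ x : Set.Icc (0 : ℝ) T, |(x : ℝ) - lam x| := by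
  set v := ν u with hv
  have hvmem : v ∈ Set.Icc (0 : ℝ) T := by
    obtain ⟨t, ht, hlt⟩ := hbij.surjOn hu
    have h := hinv1 t ht
    rw [hv, ← hlt, h]; exact ht
  have hlamv : lam v = u := hinv2 u hu
  constructor
  · set a := min u v with ha
    set b := max u v with hb
    have hab : a ≤ b := min_le_max
    have ha0 : 0 ≤ a := le_min hu.1 hvmem.1
    have hbT : b ≤ T := max_le hu.2 hvmem.2
    have hiff : ∀ t ∈ Set.Icc (0 : ℝ) T, (u ≤ lam t ↔ v ≤ t) := by
      intro t ht
      constructor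
      · intro h
        by_contra hc
        push_neg at hc
        have := hmono ht hvmem hc
        rw [hlamv] at this
        linarith
      · intro h
        calc u = lam v := hlamv.symm
          _ ≤ lam t := hmono.monotoneOn hvmem ht h
    have key : Set.EqOn
        (fun t => |(Set.Icc (0 : ℝ) (lam t)).indicator (fun _ => (1 : ℝ)) u
          - (Set.Icc (0 : ℝ) t).indicator (fun _ => (1 : ℝ)) u|)
        ((Set.Ico a b).indicator (fun _ => (1 : ℝ))) (Set.uIcc 0 T) := by
      intro t ht
      rw [Set.uIcc_of_le hT.le] at ht
      have hu0 : (0 : ℝ) ≤ u := hu.1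
      by_cases h1 : u ≤ lam t <;> by_cases h2 : u ≤ t
      · have hbt : ¬ t < b := not_lt.2 (max_le h2 ((hiff t ht).1 h1))
        simp [Set.indicator_apply, Set.mem_Icc, Set.mem_Ico, h1, h2, hu0, hbt]
      · have hm : t ∈ Set.Ico a b :=
          ⟨le_trans (min_le_right u v) ((hiff t ht).1 h1),
            lt_of_lt_of_le (not_le.1 h2) (le_max_left u v)⟩
        simp [Set.indicator_apply, Set.mem_Icc, Set.mem_Ico, h1, h2, hu0, hm.1, hm.2]
      · have htv : t < v := not_le.1 (fun h => h1 ((hiff t ht).2 h))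
        have hm : t ∈ Set.Ico a b :=
          ⟨le_trans (min_le_left u v) h2, lt_of_lt_of_le htv (le_max_right u v)⟩
        simp [Set.indicator_apply, Set.mem_Icc, Set.mem_Ico, h1, h2, hu0, hm.1, hm.2]
      · have htv : t < v := not_le.1 (fun h => h1 ((hiff t ht).2 h))
        have hta : ¬ a ≤ t := not_le.2 (lt_min (not_le.1 h2) htv)
        simp [Set.indicator_apply, Set.mem_Icc, Set.mem_Ico, h1, h2, hu0, hta]
    rw [intervalIntegral.integral_congr key, intervalIntegral.integral_of_le hT.le,
      MeasureTheory.setIntegral_indicator measurableSet_Ico,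
      MeasureTheory.setIntegral_const, smul_eq_mul, mul_one]
    have hle : volume (Set.Ioc 0 T ∩ Set.Ico a b) ≤ ENNReal.ofReal (b - a) := by
      calc volume (Set.Ioc 0 T ∩ Set.Ico a b) ≤ volume (Set.Ico a b) :=
            measure_mono Set.inter_subset_right
        _ = ENNReal.ofReal (b - a) := Real.volume_Ico
    have h1 : (volume (Set.Ioc 0 T ∩ Set.Ico a b)).toReal ≤ b - a := by
      calc (volume (Set.Ioc 0 T ∩ Set.Ico a b)).toReal
          ≤ (ENNReal.ofReal (b - a)).toReal := ENNReal.toReal_mono (by simp) hle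
        _ = b - a := ENNReal.toReal_ofReal (by linarith)
    calc (volume (Set.Ioc 0 T ∩ Set.Ico a b)).toReal ≤ b - a := h1
      _ = |u - v| := by rw [max_sub_min_eq_abs, abs_sub_comm]
  · have hbdd : BddAbove (Set.range fun x : Set.Icc (0 : ℝ) T => |(x : ℝ) - lam x|) := by
      refine ⟨T, ?_⟩
      rintro y ⟨x, rfl⟩
      have hx := x.2
      have hlx := hbij.mapsTo x.2
      rw [abs_sub_le_iff]
      exact ⟨by linarith [hx.1, hx.2, hlx.1, hlx.2], by linarith [hx.1, hx.2, hlx.1, hlx.2]⟩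
    have hle := le_ciSup hbdd (⟨v, hvmem⟩ : Set.Icc (0 : ℝ) T)
    calc |u - v| = |(v : ℝ) - lam v| := by rw [hlamv, abs_sub_comm]
      _ ≤ _ := hle
end
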